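/- Uniform contraction of powers of the BDF3 companion matrix: let 0 < s₀ < 1/11 and let M(s) be the real 3×3 matrix with rows (18s, −9s, 2s), (1, 0, 0), (0, 1, 0). There exist an integer n₀ ≥ 1 and a constant ε₀ ∈ (0,1), both depending only on s₀, such that for every s ∈ (0, s₀] and every x ∈ ℝ³ with |x| = 1, one has |M(s)^{n₀} x| ≤ ε₀. -/

import Mathlib

noncomputable section

/-- The BDF3 companion matrix with rows `(18s, -9s, 2s)`, `(1,0,0)`, `(0,1,0)`. -/
def M (s : ℝ) : Matrix (Fin 3) (Fin 3) ℝ :=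
  !![18 * s, -9 * s, 2 * s; 1, 0, 0; 0, 1, 0]

/-- The Euclidean norm on `ℝ³`. -/
def enorm3 (v : Fin 3 → ℝ) : ℝ := Real.sqrt (∑ i, v i ^ 2)

namespace BDF3Aux

open Matrix Filter Topology

attribute [local instance] Matrix.linftyOpNormedRing Matrix.linftyOpNormedAlgebra

/-- Complexification of the companion matrix. -/
def Mc (s : ℝ) : Matrix (Fin 3) (Fin 3) ℂ :=
  !![18 * (s:ℂ), -9 * s, 2 * s; 1, 0, 0; 0, 1, 0]

lemma Mc_eq_map (s : ℝ) : Mc s = (M s).map Complex.ofRealHom := by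
  ext i j
  fin_cases i <;> fin_cases j <;> simp [Mc, M, Matrix.vecHead, Matrix.vecTail]

/-- Any spectral value of `Mc s` satisfies the characteristic equation. -/
lemma char_eq (s : ℝ) (l : ℂ) (hl : l ∈ spectrum ℂ (Mc s)) :
    l ^ 3 - 18 * s * l ^ 2 + 9 * s * l - 2 * s = 0 := by
  rw [spectrum.mem_iff] at hl
  have hdet : (algebraMap ℂ (Matrix (Fin 3) (Fin 3) ℂ) l - Mc s).det = 0 := by
    by_contra h
    exact hl ((Matrix.isUnit_iff_isUnit_det _).mpr (isUnit_iff_ne_zero.mpr h))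
  have hcalc : (algebraMap ℂ (Matrix (Fin 3) (Fin 3) ℂ) l - Mc s).det
      = l ^ 3 - 18 * s * l ^ 2 + 9 * s * l - 2 * s := by
    simp [Matrix.det_fin_three, Mc, Matrix.algebraMap_matrix_apply,
      Matrix.vecHead, Matrix.vecTail]
    ring
  rw [hcalc] at hdet
  exact hdet

/-- Real-root bound. -/
lemma real_root_bound (s₀ s a : ℝ) (hs : 0 < s) (hss : s ≤ s₀) (h11 : s₀ < 1/11)
    (h : a^3 - 18*s*a^2 + 9*s*a - 2*s = 0) :
    0 < a ∧ a ≤ 1 - (1 - 11*s₀)/9 := by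
  have hq : 0 < 18*a^2 - 9*a + 2 := by nlinarith [sq_nonneg (4*a - 1)]
  have ha : 0 < a := by nlinarith [sq_nonneg a, mul_pos hs hq]
  refine ⟨ha, ?_⟩
  by_contra hc
  push_neg at hc
  rcases le_or_gt a 1 with h1 | h1
  · nlinarith [mul_nonneg (sub_nonneg.mpr hss) hq.le,
      mul_nonneg (sub_nonneg.mpr h1) (mul_nonneg (sub_nonneg.mpr h1) hs.le),
      mul_nonneg (sub_nonneg.mpr h1) (mul_nonneg (sub_nonneg.mpr h1) (sub_nonneg.mpr h1)),
      mul_pos hs hq]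
  · nlinarith [mul_nonneg (sub_nonneg.mpr h1.le) (sub_nonneg.mpr h1.le),
      mul_pos hs (by nlinarith : (0:ℝ) < a*(2 - 18*s) + 1 - 9*s),
      mul_nonneg (sub_nonneg.mpr h1.le)
        (mul_pos hs (by nlinarith : (0:ℝ) < a*(2-18*s)+1-9*s)).le]

/-- Complex-root bound. -/
lemma complex_root_bound (s₀ s a b : ℝ) (hs : 0 < s) (hss : s ≤ s₀) (h11 : s₀ < 1/11)
    (hb : b ≠ 0) (hb2 : b^2 = 3*a^2 - 36*s*a + 9*s)
    (hmu : (a^2 + b^2) * (18*s - 2*a) = 2*s) :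
    a^2 + b^2 ≤ max (1/2) (9*s₀ + 16*s₀^2) := by
  set m := a^2 + b^2 with hm
  rcases le_or_gt m (1/2) with h | h
  · exact le_max_of_le_left h
  · refine le_max_of_le_right ?_
    have hmpos : 0 < m := by positivity
    have hmu_pos : 0 < 18*s - 2*a := by
      rcases lt_trichotomy (18*s - 2*a) 0 with hneg | hzero | hpos
      · nlinarith
      · nlinarith
      · exact hpos
    have hmu4 : 18*s - 2*a ≤ 4*s := by nlinarith
    have hid : m = (18*s-2*a)^2 - 18*s*(18*s-2*a) + 9*s := by rw [hm]; linear_combination hb2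
    nlinarith [mul_pos hs hmu_pos, sq_nonneg (18*s-2*a)]

/-- Uniform spectral bound. -/
lemma spec_bound (s₀ : ℝ) (hs₀ : 0 < s₀) (h11 : s₀ < 1/11) :
    ∃ θ : ℝ, 0 ≤ θ ∧ θ < 1 ∧ ∀ s, 0 ≤ s → s ≤ s₀ →
      ∀ l ∈ spectrum ℂ (Mc s), ‖l‖ ≤ θ := by
  set c : ℝ := max (1/2) (9*s₀ + 16*s₀^2) with hc
  have hc0 : 0 ≤ c := le_max_of_le_left (by norm_num)
  have hc1 : c < 1 := by
    apply max_lt (by norm_num)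
    nlinarith
  set θ : ℝ := max (1 - (1 - 11*s₀)/9) (Real.sqrt c) with hθ
  have hθ0 : 0 ≤ θ := le_max_of_le_left (by nlinarith)
  have hθ1 : θ < 1 := by
    apply max_lt (by nlinarith)
    calc Real.sqrt c < Real.sqrt 1 := Real.sqrt_lt_sqrt hc0 hc1
      _ = 1 := Real.sqrt_one
  refine ⟨θ, hθ0, hθ1, fun s hs0 hss l hl => ?_⟩
  have h := char_eq s l hl
  rcases eq_or_lt_of_le hs0 with hs | hs
  · -- s = 0
    rw [← hs] at h
    push_cast at h
    have : l ^ 3 = 0 := by linear_combination h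
    have hl0 : l = 0 := by
      exact pow_eq_zero_iff (by norm_num) |>.mp this
    rw [hl0]
    simpa using hθ0
  · rcases eq_or_ne l.im 0 with him | him
    · -- real root
      set a := l.re with ha
      have hla : l = (a : ℂ) := Complex.ext rfl (by simpa using him)
      rw [hla] at h
      have hre : a^3 - 18*s*a^2 + 9*s*a - 2*s = 0 := by
        have := h
        push_cast at this
        exact_mod_cast this
      obtain ⟨hpos, hle⟩ := real_root_bound s₀ s a hs hss h11 hre
      rw [hla]
      calc ‖(a : ℂ)‖ = |a| := Complex.norm_real a
        _ = a := abs_of_pos hpos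
        _ ≤ 1 - (1 - 11*s₀)/9 := hle
        _ ≤ θ := le_max_left _ _
    · -- complex root
      set a := l.re
      set b := l.im
      have hl' : l = a + b * Complex.I := (Complex.re_add_im l).symm
      rw [hl'] at h
      have hre := congrArg Complex.re h
      have himp := congrArg Complex.im h
      simp [Complex.ext_iff, pow_succ, Complex.add_re, Complex.add_im, Complex.mul_re,
        Complex.mul_im] at hre himp
      have him' : b * (3*a^2 - b^2 - 36*s*a + 9*s) = 0 := by linear_combination himp
      have hb2 : b^2 = 3*a^2 - 36*s*a + 9*s := by
        rcases mul_eq_zero.mp him' with h0 | h0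
        · exact absurd h0 him
        · linarith
      have hmu : (a^2 + b^2) * (18*s - 2*a) = 2*s := by linear_combination hre + a * hb2
      have hbound := complex_root_bound s₀ s a b hs hss h11 him hb2 hmu
      have hnorm2 : ‖l‖^2 = a^2 + b^2 := by
        rw [Complex.sq_norm, Complex.normSq_apply]
        ring
      have : ‖l‖ ≤ Real.sqrt c := by
        rw [show Real.sqrt c = Real.sqrt c from rfl]
        have h2 : ‖l‖^2 ≤ c := hnorm2 ▸ hbound
        nlinarith [Real.sq_sqrt hc0, Real.sqrt_nonneg c, norm_nonneg l,
          abs_nonneg (‖l‖ - Real.sqrt c)]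
      exact this.trans (le_max_right _ _)

/-- For each `s`, some power of `Mc s` has norm `< 1/8`. -/
lemma small_power (A : Matrix (Fin 3) (Fin 3) ℂ) (θ : ℝ) (hθ0 : 0 ≤ θ) (hθ1 : θ < 1)
    (hspec : ∀ l ∈ spectrum ℂ A, ‖l‖ ≤ θ) :
    ∃ n : ℕ, 1 ≤ n ∧ ‖A ^ n‖ < 1/8 := by
  set θ' : ℝ := (θ + 1) / 2 with hθ'
  have hθ'0 : 0 < θ' := by positivity
  have hθ'1 : θ' < 1 := by simp only [hθ']; linarith
  have hsr : spectralRadius ℂ A ≤ ENNReal.ofReal θ := by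
    rw [spectralRadius]
    refine iSup₂_le fun l hl => ?_
    rw [← enorm_eq_nnnorm, ← ofReal_norm]
    exact ENNReal.ofReal_le_ofReal (hspec l hl)
  have hlim : limsup (fun n : ℕ => (‖A ^ n‖₊ : ENNReal) ^ (1 / n : ℝ)) atTop
      < ENNReal.ofReal θ' := by
    refine lt_of_le_of_lt
      ((spectrum.limsup_pow_nnnorm_pow_one_div_le_spectralRadius A).trans hsr) ?_
    rw [ENNReal.ofReal_lt_ofReal_iff (by positivity)]
    linarith
  have hev : ∀ᶠ n : ℕ in atTop, (‖A ^ n‖₊ : ENNReal) ^ (1 / n : ℝ) < ENNReal.ofReal θ' :=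
    Filter.eventually_lt_of_limsup_lt hlim
  have hpow : Tendsto (fun n : ℕ => θ' ^ n) atTop (nhds 0) :=
    tendsto_pow_atTop_nhds_zero_of_lt_one hθ'0.le hθ'1
  have hev2 : ∀ᶠ n : ℕ in atTop, θ' ^ n < 1/8 :=
    hpow.eventually (Filter.Tendsto.eventually_lt_const (by norm_num) tendsto_id) |>.mono
      (fun n h => h)
  obtain ⟨n, ⟨hn2, hn3⟩, hn1⟩ := ((hev.and hev2).and (eventually_ge_atTop 1)).exists
  refine ⟨n, hn1, ?_⟩
  have hn0 : (n:ℝ) ≠ 0 := by positivity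
  have h1 : (‖A ^ n‖₊ : ENNReal) < (ENNReal.ofReal θ') ^ (n : ℝ) := by
    have := ENNReal.rpow_lt_rpow hn2 (by positivity : (0:ℝ) < (n:ℝ))
    rwa [← ENNReal.rpow_mul, one_div, inv_mul_cancel₀ hn0, ENNReal.rpow_one] at this
  have h2 : (ENNReal.ofReal θ') ^ (n : ℝ) = ENNReal.ofReal (θ' ^ n) := by
    rw [ENNReal.ofReal_rpow_of_pos hθ'0, Real.rpow_natCast]
  rw [h2, ← enorm_eq_nnnorm, ← ofReal_norm,
    ENNReal.ofReal_lt_ofReal_iff (by positivity)] at h1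
  linarith

/-- Uniform power bound by compactness. -/
lemma uniform_power (s₀ : ℝ) (hs₀ : 0 < s₀)
    (H : ∀ s ∈ Set.Icc (0:ℝ) s₀, ∃ n : ℕ, 1 ≤ n ∧ ‖(Mc s) ^ n‖ < 1/8) :
    ∃ N : ℕ, 1 ≤ N ∧ ∀ s ∈ Set.Icc (0:ℝ) s₀, ‖(Mc s) ^ N‖ ≤ 1/8 := by
  have hcont : ∀ n : ℕ, Continuous fun s : ℝ => ‖(Mc s) ^ n‖ := by
    intro n
    have h1 : Continuous fun s : ℝ => Mc s := by
      apply continuous_matrix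
      intro i j
      fin_cases i <;> fin_cases j <;> simp [Mc] <;> fun_prop
    exact (h1.pow n).norm
  choose! n hn1 hn2 using H
  set U : ℝ → Set ℝ := fun s => {t | ‖(Mc t) ^ (n s)‖ < 1/8} with hU
  have hopen : ∀ s ∈ Set.Icc (0:ℝ) s₀, IsOpen (U s) := fun s _ =>
    isOpen_lt (hcont (n s)) continuous_const
  have hcover : Set.Icc (0:ℝ) s₀ ⊆ ⋃ s ∈ Set.Icc (0:ℝ) s₀, U s := by
    intro s hs
    exact Set.mem_biUnion hs (hn2 s hs)
  obtain ⟨t, ht⟩ := (isCompact_Icc).elim_finite_subcover_image hopen hcover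
  obtain ⟨htsub, htfin, htcov⟩ := ht
  refine ⟨∏ i ∈ htfin.toFinset, n i,
    Finset.one_le_prod' fun i hi => hn1 i (htsub (htfin.mem_toFinset.mp hi)), ?_⟩
  intro s hs
  obtain ⟨i, hi, hsi⟩ := Set.mem_iUnion₂.mp (htcov hs)
  have hdvd : n i ∣ ∏ j ∈ htfin.toFinset, n j :=
    Finset.dvd_prod_of_mem n (htfin.mem_toFinset.mpr hi)
  obtain ⟨k, hk⟩ := hdvd
  have hk1 : 1 ≤ k := by
    rcases Nat.eq_zero_or_pos k with h0 | h0
    · exfalso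
      have h1 := Finset.one_le_prod' (fun j hj => hn1 j (htsub (htfin.mem_toFinset.mp hj)))
      rw [h0, mul_zero] at hk
      omega
    · exact h0
  calc ‖(Mc s) ^ (∏ j ∈ htfin.toFinset, n j)‖
      = ‖((Mc s) ^ (n i)) ^ k‖ := by rw [← pow_mul, ← hk]
    _ ≤ ‖(Mc s) ^ (n i)‖ ^ k := norm_pow_le' _ hk1
    _ ≤ (1/8) ^ k := pow_le_pow_left₀ (norm_nonneg _) (le_of_lt hsi) k
    _ ≤ (1/8) ^ 1 := pow_le_pow_of_le_one (by norm_num) (by norm_num) hk1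
    _ = 1/8 := pow_one _

/-- Final conversion to the Euclidean norm. -/
lemma final_bound (s : ℝ) (N : ℕ) (hN : ‖(Mc s) ^ N‖ ≤ 1/8) (x : Fin 3 → ℝ)
    (hx : enorm3 x = 1) : enorm3 ((M s ^ N).mulVec x) ≤ 1/2 := by
  have hsum : ∑ i, x i ^ 2 = 1 := by
    have h0 : 0 ≤ ∑ i, x i ^ 2 := Finset.sum_nonneg fun i _ => sq_nonneg _
    rw [enorm3] at hx
    calc ∑ i, x i ^ 2 = Real.sqrt (∑ i, x i ^ 2) ^ 2 := (Real.sq_sqrt h0).symm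
      _ = 1 := by rw [hx]; norm_num
  have hxi : ∀ i, |x i| ≤ 1 := by
    intro i
    have h1 : x i ^ 2 ≤ 1 := by
      rw [← hsum]
      exact Finset.single_le_sum (fun j _ => sq_nonneg (x j)) (Finset.mem_univ i)
    nlinarith [abs_nonneg (x i), sq_abs (x i)]
  set xc : Fin 3 → ℂ := fun i => (x i : ℂ) with hxc
  have hxcnorm : ‖xc‖ ≤ 1 := by
    rw [pi_norm_le_iff_of_nonneg zero_le_one]
    intro i
    simpa [hxc] using hxi i
  set w := (M s ^ N).mulVec x with hw
  have hkey : ∀ i, ((Mc s ^ N).mulVec xc) i = ((w i : ℂ)) := by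
    intro i
    rw [Mc_eq_map]
    have hpow : ((M s).map (Complex.ofRealHom : ℝ →+* ℂ)) ^ N
        = (M s ^ N).map Complex.ofRealHom := by
      simpa using (map_pow (Complex.ofRealHom.mapMatrix (m := Fin 3)) (M s) N).symm
    rw [hpow]
    exact (RingHom.map_mulVec Complex.ofRealHom (M s ^ N) x i).symm
  have hwc : ‖(Mc s ^ N).mulVec xc‖ ≤ 1/8 := by
    calc ‖(Mc s ^ N).mulVec xc‖ ≤ ‖(Mc s) ^ N‖ * ‖xc‖ := Matrix.linfty_opNorm_mulVec _ _
      _ ≤ (1/8) * 1 := by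
          apply mul_le_mul hN hxcnorm (norm_nonneg _) (by norm_num)
      _ = 1/8 := by norm_num
  have hwi : ∀ i, |w i| ≤ 1/8 := by
    intro i
    have h1 : ‖((Mc s ^ N).mulVec xc) i‖ ≤ 1/8 := (norm_le_pi_norm _ i).trans hwc
    rwa [hkey i, Complex.norm_real, Real.norm_eq_abs] at h1
  rw [enorm3]
  have hsum2 : ∑ i, w i ^ 2 ≤ 1/4 := by
    have hsq : ∀ i : Fin 3, w i ^ 2 ≤ (1/8)^2 := fun i => by
      have h2 := abs_le.mp (hwi i)
      exact sq_le_sq' (by linarith [h2.1]) h2.2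
    calc ∑ i, w i ^ 2 ≤ ∑ _i : Fin 3, ((1:ℝ)/8)^2 := Finset.sum_le_sum fun i _ => hsq i
      _ ≤ 1/4 := by norm_num [Fin.sum_univ_three]
  calc Real.sqrt (∑ i, w i ^ 2) ≤ Real.sqrt (1/4) := Real.sqrt_le_sqrt hsum2
    _ = 1/2 := by
        rw [show (1:ℝ)/4 = (1/2)^2 by norm_num, Real.sqrt_sq (by norm_num)]

end BDF3Aux

/-- uniform contraction of powers of the BDF3 companion matrix.
For `0 < s₀ < 1/11` there exist `n₀ ≥ 1` and `ε₀ ∈ (0,1)`, depending only on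
`s₀`, such that `|M(s)^{n₀} x| ≤ ε₀` for all `0 < s ≤ s₀` and all unit `x ∈ ℝ³`. -/
theorem companion_power_contraction (s₀ : ℝ) (hs₀ : 0 < s₀) (hs₀' : s₀ < 1 / 11) :
    ∃ (n₀ : ℕ) (ε₀ : ℝ), 1 ≤ n₀ ∧ 0 < ε₀ ∧ ε₀ < 1 ∧
      ∀ s : ℝ, 0 < s → s ≤ s₀ → ∀ x : Fin 3 → ℝ, enorm3 x = 1 →
        enorm3 ((M s ^ n₀).mulVec x) ≤ ε₀ := by
  classical
  obtain ⟨θ, hθ0, hθ1, hspec⟩ := BDF3Aux.spec_bound s₀ hs₀ hs₀'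
  obtain ⟨N, hN1, hN⟩ := BDF3Aux.uniform_power s₀ hs₀ (fun s hs =>
    BDF3Aux.small_power (BDF3Aux.Mc s) θ hθ0 hθ1 (hspec s hs.1 hs.2))
  refine ⟨N, 1/2, hN1, by norm_num, by norm_num, fun s hs hss x hx => ?_⟩
  exact BDF3Aux.final_bound s N (hN s ⟨hs.le, hss⟩) x hx
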